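/- Constructor reconstruction in bounded time: there is a constant n ∈ ℕ (depending only on the signature) such that for every constructor c_i, every 0 ≤ m ≤ ar(c_i), and all constructor terms t_1,…,t_{ar(c_i)}, the open term CON^i_{x_1,…,x_m} with ⌈t_1⌉,…,⌈t_m⌉ substituted for x_1,…,x_m, applied to ⌈t_{m+1}⌉,…,⌈t_{ar(c_i)}⌉, reduces in at most n weak CBV steps to ⌈c_i(t_1,…,t_{ar(c_i)})⌉; moreover, if at least one of the arguments in positions m+1,…,ar(c_i) is the error term ⊥, it reduces in at most n steps to ⊥. -/

import Mathlib

/-- Pure untyped λ-terms with named variables. -/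
inductive Tm : Type
  | var : ℕ → Tm
  | lam : ℕ → Tm → Tm
  | app : Tm → Tm → Tm
deriving DecidableEq

namespace Tm

/-- Free variables. -/
def fv : Tm → Finset ℕ
  | var x => {x}
  | lam x M => fv M \ {x}
  | app M N => fv M ∪ fv N

/-- A term is closed when it has no free variables. -/
def Closed (M : Tm) : Prop := fv M = ∅

/-- Values: variables and abstractions. -/
def IsValue : Tm → Prop
  | var _ => True
  | lam _ _ => True
  | app _ _ => False

/-- (Naive) substitution `M{N/x}`. -/
def subst : Tm → ℕ → Tm → Tm
  | var y, x, N => if y = x then N else var y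
  | lam y P, x, N => if y = x then lam y P else lam y (subst P x N)
  | app P Q, x, N => app (subst P x N) (subst Q x N)

/-- Weak call-by-value reduction: β-redexes whose argument is a value,
closed under both application contexts, never under λ. -/
inductive Cbv : Tm → Tm → Prop
  | beta {x M V} : IsValue V → Cbv (app (lam x M) V) (subst M x V)
  | appL {M N L} : Cbv M N → Cbv (app M L) (app N L)
  | appR {M N L} : Cbv M N → Cbv (app L M) (app L N)

/-- The subterm relation on λ-terms. -/
inductive Sub : Tm → Tm → Prop
  | refl (M) : Sub M M
  | lam {M N x} : Sub M N → Sub M (lam x N)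
  | appL {M N L} : Sub M N → Sub M (app N L)
  | appR {M N L} : Sub M L → Sub M (app N L)

end Tm

/-- `M N₁ … Nₖ` (left-nested application). -/
def appList : Tm → List Tm → Tm := List.foldl Tm.app

/-- `λx₁.…λxₖ.M`. -/
def lams : List ℕ → Tm → Tm := fun xs M => xs.foldr Tm.lam M

/-- `stepsN R n a b`: `a` reduces to `b` in exactly `n` `R`-steps. -/
def stepsN {α : Type*} (R : α → α → Prop) : ℕ → α → α → Prop
  | 0, a, b => a = b
  | n + 1, a, b => ∃ c, R a c ∧ stepsN R n c b

/-- `a` is an `R`-normal form. -/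
def NormalForm {α : Type*} (R : α → α → Prop) (a : α) : Prop := ¬ ∃ b, R a b

/-- First-order constructor terms over a signature with constructors
`c_0,…,c_{g-1}` (indices as naturals). -/
inductive CTm : Type
  | mk : ℕ → List CTm → CTm

/-- Well-formed constructor terms over the signature with `g` constructors of
arities `ar`. -/
inductive CTm.WFC (g : ℕ) (ar : Fin g → ℕ) : CTm → Prop
  | mk {i : ℕ} {ts : List CTm} (h : i < g) :
      ts.length = ar ⟨i, h⟩ → (∀ t ∈ ts, CTm.WFC g ar t) →
      CTm.WFC g ar (CTm.mk i ts)

/-- Scott encoding of constructor terms: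
`⌈cᵢ(t₁,…,tₙ)⌉ = λx₁…λx_g.λy. xᵢ ⌈t₁⌉…⌈tₙ⌉`. -/
def CTm.encode (g : ℕ) : CTm → Tm
  | .mk i ts =>
      lams (List.range (g + 1))
        (appList (.var i) (ts.attach.map fun t => CTm.encode g t.1))
termination_by t => sizeOf t
decreasing_by all_goals first
  | (simp_wf; have := List.sizeOf_lt_of_mem t.2; omega)
  | (simp_wf; omega)
  | simp_wf

/-- The error value `⊥ = λx₁…λx_g.λy.y`. -/
def errTm (g : ℕ) : Tm := lams (List.range (g + 1)) (.var g)

/-- The λ-term `⌈cᵢ⌉ = λx₁…λx_{ar i}.λy₁…λy_g.λz. yᵢ x₁ … x_{ar i}`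
computing the constructor `cᵢ`. -/
def encC (g : ℕ) (ar : Fin g → ℕ) (i : Fin g) : Tm :=
  lams (List.range' (g + 1) (ar i) ++ List.range (g + 1))
    (appList (.var i.val) ((List.range' (g + 1) (ar i)).map .var))

/-- Simultaneous (sequential, for closed replacements) substitution. -/
def substL (M : Tm) (xs : List ℕ) (Ns : List Tm) : Tm :=
  (xs.zip Ns).foldl (fun acc p => Tm.subst acc p.1 p.2) M

/-- The terms `CON^i_{x₁,…,x_m}` (free variables `x_t = g+1+t`), defined by
downward recursion on `ar i - m` (the first argument is the fuel
`ar i - m`): the base case is `λy₁…λy_g.λz.yᵢ x₁…x_{ar i}`, the step case is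
`λy. y N^m_{1,i} … N^m_{g,i} L^m_i` with
`N^m_{j,i} = λz₁…z_{ar j}.(λx_{m+1}.CON^i_{x₁,…,x_{m+1}}) CON^j_{z₁,…,z_{ar j}}`
and `L^m_i = λz_{m+2}…λz_{ar i}.⊥`. -/
def CONf (g : ℕ) (ar : Fin g → ℕ) : ℕ → Fin g → List ℕ → Tm
  | 0, i, xs => lams (List.range (g + 1)) (appList (.var i.val) (xs.map .var))
  | (k+1), i, xs =>
      Tm.lam (2 * (g + 2 + Finset.univ.sup ar) + 2)
        (appList (.var (2 * (g + 2 + Finset.univ.sup ar) + 2))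
          ((List.ofFn fun j : Fin g =>
              lams (List.range' (g + 2 + Finset.univ.sup ar) (ar j))
                (Tm.app
                  (Tm.lam (g + 1 + xs.length)
                    (CONf g ar k i (xs ++ [g + 1 + xs.length])))
                  (CONf g ar 0 j
                    (List.range' (g + 2 + Finset.univ.sup ar) (ar j))))) ++
            [lams (List.range' (g + 2 + Finset.univ.sup ar) (ar i - xs.length - 1))
              (errTm g)]))
termination_by k => k

/-- `CON^i_{x₁,…,x_m}` with the canonical variable names `x_t = g+1+t`. -/
def CON (g : ℕ) (ar : Fin g → ℕ) (i : Fin g) (m : ℕ) : Tm :=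
  CONf g ar (ar i - m) i ((List.range m).map (g + 1 + ·))

instance : Inhabited CTm := ⟨.mk 0 []⟩


section Aux

open Tm

/-! ### Basic lemmas -/

lemma subst_not_free (M : Tm) (x : ℕ) (N : Tm) (h : x ∉ M.fv) : M.subst x N = M := by
  induction M with
  | var y =>
    simp only [Tm.fv, Finset.mem_singleton] at h
    show (if y = x then N else Tm.var y) = Tm.var y
    rw [if_neg (fun e => h e.symm)]
  | lam y P ih =>
    show (if y = x then Tm.lam y P else Tm.lam y (P.subst x N)) = Tm.lam y P
    by_cases hyx : y = x
    · rw [if_pos hyx]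
    · rw [if_neg hyx]
      simp only [Tm.fv, Finset.mem_sdiff, Finset.mem_singleton, not_and, not_not] at h
      have : x ∉ P.fv := fun hx => hyx ((h hx).symm)
      rw [ih this]
  | app P Q ihP ihQ =>
    simp only [Tm.fv, Finset.mem_union] at h
    push_neg at h
    show Tm.app (P.subst x N) (Q.subst x N) = Tm.app P Q
    rw [ihP h.1, ihQ h.2]

lemma fv_subst_subset (M : Tm) (x : ℕ) (N : Tm) :
    (M.subst x N).fv ⊆ (M.fv \ {x}) ∪ N.fv := by
  induction M with
  | var y =>
    intro a ha
    show a ∈ (({y} : Finset ℕ) \ {x}) ∪ N.fv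
    by_cases h : y = x
    · have : (Tm.var y).subst x N = N := by show (if y = x then N else _) = N; rw [if_pos h]
      rw [this] at ha; simp [ha]
    · have : (Tm.var y).subst x N = Tm.var y := by
        show (if y = x then N else _) = _; rw [if_neg h]
      rw [this] at ha
      simp only [Tm.fv, Finset.mem_singleton] at ha
      subst ha
      simp [h]
  | lam y P ih =>
    intro a ha
    by_cases h : y = x
    · have : (Tm.lam y P).subst x N = Tm.lam y P := by
        show (if y = x then _ else _) = _; rw [if_pos h]
      rw [this] at ha
      subst h
      simp only [Tm.fv, Finset.mem_sdiff, Finset.mem_singleton] at ha ⊢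
      simp only [Finset.mem_union, Finset.mem_sdiff, Finset.mem_singleton]
      tauto
    · have : (Tm.lam y P).subst x N = Tm.lam y (P.subst x N) := by
        show (if y = x then _ else _) = _; rw [if_neg h]
      rw [this] at ha
      simp only [Tm.fv, Finset.mem_sdiff, Finset.mem_singleton] at ha
      rcases Finset.mem_union.1 (ih ha.1) with h1 | h1
      · simp only [Finset.mem_sdiff, Finset.mem_singleton] at h1
        simp only [Tm.fv, Finset.mem_union, Finset.mem_sdiff, Finset.mem_singleton]
        tauto
      · simp [h1]
  | app P Q ihP ihQ =>
    intro a ha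
    have ha' : a ∈ (P.subst x N).fv ∪ (Q.subst x N).fv := ha
    simp only [Tm.fv, Finset.mem_union, Finset.mem_sdiff, Finset.mem_singleton] at ha' ⊢
    rcases ha' with h1 | h1
    · have := ihP h1
      simp only [Finset.mem_union, Finset.mem_sdiff, Finset.mem_singleton] at this
      tauto
    · have := ihQ h1
      simp only [Finset.mem_union, Finset.mem_sdiff, Finset.mem_singleton] at this
      tauto

lemma fv_subst_closed (M : Tm) (x : ℕ) (N : Tm) (hN : N.fv = ∅) :
    (M.subst x N).fv ⊆ M.fv \ {x} := by
  have := fv_subst_subset M x N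
  rwa [hN, Finset.union_empty] at this

lemma lams_cons (x : ℕ) (xs : List ℕ) (M : Tm) :
    lams (x :: xs) M = Tm.lam x (lams xs M) := rfl

lemma appList_cons (M N : Tm) (l : List Tm) :
    appList M (N :: l) = appList (Tm.app M N) l := rfl

lemma appList_append (M : Tm) (l1 l2 : List Tm) :
    appList M (l1 ++ l2) = appList (appList M l1) l2 := List.foldl_append ..

lemma fv_lams (xs : List ℕ) (M : Tm) :
    (lams xs M).fv = M.fv \ xs.toFinset := by
  induction xs with
  | nil => simp [lams]
  | cons x xs ih =>
    show (lams xs M).fv \ {x} = _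
    rw [ih]
    ext a
    simp only [Finset.mem_sdiff, Finset.mem_singleton, List.toFinset_cons, Finset.mem_insert,
      List.mem_toFinset]
    constructor
    · rintro ⟨⟨h1, h2⟩, h3⟩; exact ⟨h1, by push_neg; exact ⟨h3, by simpa using h2⟩⟩
    · rintro ⟨h1, h2⟩; push_neg at h2; exact ⟨⟨h1, by simpa using h2.2⟩, h2.1⟩

lemma fv_appList (M : Tm) (l : List Tm) :
    (appList M l).fv = M.fv ∪ l.foldr (fun N s => N.fv ∪ s) ∅ := by
  induction l generalizing M with
  | nil => simp [appList]
  | cons N l ih =>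
    rw [appList_cons, ih]
    simp [Tm.fv, Finset.union_assoc]

lemma subst_lams (xs : List ℕ) (M : Tm) (x : ℕ) (N : Tm) (h : x ∉ xs) :
    (lams xs M).subst x N = lams xs (M.subst x N) := by
  induction xs with
  | nil => simp [lams]
  | cons y ys ih =>
    simp at h
    push_neg at h
    rw [lams_cons, lams_cons, Tm.subst, if_neg (Ne.symm h.1), ih h.2]

lemma subst_appList (M : Tm) (l : List Tm) (x : ℕ) (N : Tm) :
    (appList M l).subst x N = appList (M.subst x N) (l.map (fun P => P.subst x N)) := by
  induction l generalizing M with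
  | nil => simp [appList]
  | cons P l ih =>
    rw [appList_cons, ih, List.map_cons, appList_cons, Tm.subst]

/-! ### substL lemmas -/

lemma substL_nil (M : Tm) (vs : List Tm) : substL M [] vs = M := rfl

lemma substL_nil' (M : Tm) (xs : List ℕ) : substL M xs [] = M := by
  simp [substL]

lemma substL_cons (M : Tm) (x : ℕ) (xs : List ℕ) (v : Tm) (vs : List Tm) :
    substL M (x :: xs) (v :: vs) = substL (M.subst x v) xs vs := rfl

lemma substL_not_free (M : Tm) (xs : List ℕ) (vs : List Tm)
    (h : ∀ x ∈ xs, x ∉ M.fv) : substL M xs vs = M := by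
  induction xs generalizing M vs with
  | nil => rfl
  | cons x xs ih =>
    cases vs with
    | nil => simp [substL]
    | cons v vs =>
      rw [substL_cons, subst_not_free M x v (h x (by simp))]
      exact ih M vs (fun y hy => h y (by simp [hy]))

lemma substL_closed (M : Tm) (xs : List ℕ) (vs : List Tm) (h : M.fv = ∅) :
    substL M xs vs = M :=
  substL_not_free M xs vs (fun x _ => by simp [h])

lemma fv_substL_subset (M : Tm) (xs : List ℕ) (vs : List Tm)
    (hlen : xs.length = vs.length) (hc : ∀ v ∈ vs, v.fv = ∅) :
    (substL M xs vs).fv ⊆ M.fv \ xs.toFinset := by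
  induction xs generalizing M vs with
  | nil => simp [substL_nil]
  | cons x xs ih =>
    cases vs with
    | nil => simp at hlen
    | cons v vs =>
      rw [substL_cons]
      refine (ih (M.subst x v) vs (by simpa using hlen)
        (fun w hw => hc w (by simp [hw]))).trans ?_
      intro a ha
      simp at ha
      have := fv_subst_closed M x v (hc v (by simp)) ha.1
      simp at this
      simp [this.1, this.2, ha.2]

lemma substL_append (M : Tm) (xs ys : List ℕ) (vs ws : List Tm)
    (hlen : xs.length = vs.length) :
    substL M (xs ++ ys) (vs ++ ws) = substL (substL M xs vs) ys ws := by
  unfold substL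
  rw [List.zip_append hlen, List.foldl_append]

lemma substL_lams (xs : List ℕ) (ys : List ℕ) (M : Tm) (vs : List Tm)
    (h : ∀ x ∈ xs, x ∉ ys) :
    substL (lams ys M) xs vs = lams ys (substL M xs vs) := by
  induction xs generalizing M vs with
  | nil => rfl
  | cons x xs ih =>
    cases vs with
    | nil => simp [substL_nil']
    | cons v vs =>
      rw [substL_cons, subst_lams _ _ _ _ (h x (by simp)), substL_cons]
      exact ih _ _ (fun y hy => h y (by simp [hy]))

lemma substL_appList (M : Tm) (l : List Tm) (xs : List ℕ) (vs : List Tm) :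
    substL (appList M l) xs vs
      = appList (substL M xs vs) (l.map (fun P => substL P xs vs)) := by
  induction xs generalizing M l vs with
  | nil => simp [substL_nil]
  | cons x xs ih =>
    cases vs with
    | nil => simp [substL_nil']
    | cons v vs =>
      rw [substL_cons, subst_appList, ih, substL_cons]
      congr 1
      simp [substL_cons]

lemma substL_app (M N : Tm) (xs : List ℕ) (vs : List Tm) :
    substL (Tm.app M N) xs vs = Tm.app (substL M xs vs) (substL N xs vs) := by
  induction xs generalizing M N vs with
  | nil => rfl
  | cons x xs ih =>
    cases vs with
    | nil => simp [substL_nil']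
    | cons v vs => rw [substL_cons, Tm.subst, ih, substL_cons, substL_cons]

lemma substL_lam (y : ℕ) (M : Tm) (xs : List ℕ) (vs : List Tm) (h : y ∉ xs) :
    substL (Tm.lam y M) xs vs = Tm.lam y (substL M xs vs) := by
  induction xs generalizing M vs with
  | nil => rfl
  | cons x xs ih =>
    cases vs with
    | nil => simp [substL_nil']
    | cons v vs =>
      simp at h
      push_neg at h
      rw [substL_cons, Tm.subst, if_neg h.1, ih _ _ h.2, substL_cons]

lemma substL_appList_vars (M : Tm) (xs : List ℕ) (vs : List Tm)
    (hM : ∀ x ∈ xs, x ∉ M.fv) (nodup : xs.Nodup) (hlen : xs.length = vs.length)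
    (hc : ∀ v ∈ vs, v.fv = ∅) :
    substL (appList M (xs.map Tm.var)) xs vs = appList M vs := by
  induction xs generalizing M vs with
  | nil =>
    cases vs with
    | nil => rfl
    | cons v vs => simp at hlen
  | cons x xs ih =>
    cases vs with
    | nil => simp at hlen
    | cons v vs =>
      have hx : x ∉ xs := (List.nodup_cons.1 nodup).1
      rw [List.map_cons, appList_cons, substL_cons, subst_appList]
      have h1 : (Tm.app M (Tm.var x)).subst x v = Tm.app M v := by
        show Tm.app (M.subst x v) ((Tm.var x).subst x v) = _
        rw [subst_not_free M x v (hM x (by simp)),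
          show (Tm.var x).subst x v = v from by show (if x = x then v else _) = v; rw [if_pos rfl]]
      have h2 : (xs.map Tm.var).map (fun P => P.subst x v) = xs.map Tm.var := by
        rw [List.map_map]
        apply List.map_congr_left
        intro y hy
        show (Tm.var y).subst x v = Tm.var y
        refine subst_not_free _ _ _ ?_
        simp only [Tm.fv, Finset.mem_singleton]
        exact fun e => hx (e ▸ hy)
      rw [h1, h2, ih (Tm.app M v) vs ?_ (List.nodup_cons.1 nodup).2 (by simpa using hlen)
        (fun w hw => hc w (by simp [hw]))]
      · rfl
      · intro y hy
        simp only [Tm.fv, Finset.mem_union]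
        push_neg
        refine ⟨fun hf => hM y (by simp [hy]) hf, ?_⟩
        simp [hc v (by simp)]

lemma substL_var_range' (a n p : ℕ) (hp : p < n) (vs : List Tm) (d : Tm)
    (hlen : vs.length = n) (hc : ∀ v ∈ vs, v.fv = ∅) :
    substL (Tm.var (a + p)) (List.range' a n) vs = vs.getD p d := by
  induction n generalizing a p vs with
  | zero => omega
  | succ n ih =>
    cases vs with
    | nil => simp at hlen
    | cons v vs =>
      rw [List.range'_succ, substL_cons]
      cases p with
      | zero =>
        rw [Tm.subst, if_pos (by omega)]
        simp [substL_closed _ _ _ (hc v (by simp))]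
      | succ p =>
        rw [Tm.subst, if_neg (by omega)]
        have : a + (p + 1) = (a + 1) + p := by omega
        rw [this, ih (a+1) p (by omega) vs (by simpa using hlen)
          (fun w hw => hc w (by simp [hw]))]
        simp


/-! ### Reduction machinery -/

lemma stepsN_trans {α : Type*} {R : α → α → Prop} :
    ∀ {m n : ℕ} {a b c : α}, stepsN R m a b → stepsN R n b c → stepsN R (m + n) a c := by
  intro m
  induction m with
  | zero => intro n a b c h1 h2; cases h1; simpa using h2
  | succ m ih =>
    intro n a b c h1 h2
    obtain ⟨d, hd, hrest⟩ := h1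
    have e : m + 1 + n = (m + n) + 1 := by omega
    rw [e]
    exact ⟨d, hd, ih hrest h2⟩

/-- `a` reduces to `b` in at most `n` CBV steps. -/
def RedLe (n : ℕ) (a b : Tm) : Prop := ∃ k ≤ n, stepsN Tm.Cbv k a b

lemma RedLe.refl (n : ℕ) (a : Tm) : RedLe n a a := ⟨0, Nat.zero_le n, rfl⟩

lemma RedLe.of_eq {n : ℕ} {a b : Tm} (h : a = b) : RedLe n a b := h ▸ RedLe.refl n a

lemma RedLe.mono {m n : ℕ} {a b : Tm} (h : RedLe m a b) (hmn : m ≤ n) : RedLe n a b := by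
  obtain ⟨k, hk, hs⟩ := h
  exact ⟨k, hk.trans hmn, hs⟩

lemma RedLe.trans {m n : ℕ} {a b c : Tm} (h1 : RedLe m a b) (h2 : RedLe n b c) :
    RedLe (m + n) a c := by
  obtain ⟨k1, hk1, hs1⟩ := h1
  obtain ⟨k2, hk2, hs2⟩ := h2
  exact ⟨k1 + k2, Nat.add_le_add hk1 hk2, stepsN_trans hs1 hs2⟩

lemma RedLe.single {a b : Tm} (h : Tm.Cbv a b) : RedLe 1 a b :=
  ⟨1, le_refl 1, b, h, rfl⟩

lemma cbv_appList_head {M N : Tm} (l : List Tm) (h : Tm.Cbv M N) :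
    Tm.Cbv (appList M l) (appList N l) := by
  induction l generalizing M N with
  | nil => exact h
  | cons P l ih => exact ih (Tm.Cbv.appL h)

lemma stepsN_appList_head {k : ℕ} {M N : Tm} (l : List Tm) (h : stepsN Tm.Cbv k M N) :
    stepsN Tm.Cbv k (appList M l) (appList N l) := by
  induction k generalizing M with
  | zero => cases h; rfl
  | succ k ih =>
    obtain ⟨P, hP, hrest⟩ := h
    exact ⟨appList P l, cbv_appList_head l hP, ih hrest⟩

lemma RedLe.appList_head {n : ℕ} {M N : Tm} (l : List Tm) (h : RedLe n M N) :
    RedLe n (appList M l) (appList N l) := by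
  obtain ⟨k, hk, hs⟩ := h
  exact ⟨k, hk, stepsN_appList_head l hs⟩

lemma stepsN_appR {k : ℕ} {M a b : Tm} (h : stepsN Tm.Cbv k a b) :
    stepsN Tm.Cbv k (Tm.app M a) (Tm.app M b) := by
  induction k generalizing a with
  | zero => cases h; rfl
  | succ k ih =>
    obtain ⟨c, hc, hrest⟩ := h
    exact ⟨Tm.app M c, Tm.Cbv.appR hc, ih hrest⟩

lemma RedLe.appList_args {n : ℕ} {l1 l2 : List Tm} (M : Tm)
    (h : List.Forall₂ (RedLe n) l1 l2) :
    RedLe (n * l1.length) (appList M l1) (appList M l2) := by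
  induction h generalizing M with
  | nil => exact RedLe.refl _ _
  | @cons a b l1 l2 hab _ ih =>
    rw [appList_cons, appList_cons]
    have h1 : RedLe n (appList M (a :: l1)) (appList M (b :: l1)) := by
      rw [appList_cons, appList_cons]
      refine RedLe.appList_head l1 ?_
      obtain ⟨k, hk, hs⟩ := hab
      exact ⟨k, hk, stepsN_appR hs⟩
    have h2 := ih (Tm.app M b)
    have := h1.trans h2
    refine this.mono ?_
    simp [List.length_cons, Nat.mul_succ]
    omega

/-- Lambda-headed terms. -/
def IsLam (M : Tm) : Prop := ∃ x B, M = Tm.lam x B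

lemma IsLam.isValue {M : Tm} (h : IsLam M) : Tm.IsValue M := by
  obtain ⟨x, B, rfl⟩ := h; trivial

lemma isLam_lams {xs : List ℕ} (B : Tm) (h : xs ≠ []) : IsLam (lams xs B) := by
  cases xs with
  | nil => exact absurd rfl h
  | cons x xs => exact ⟨x, lams xs B, rfl⟩

lemma isLam_subst {M : Tm} (x : ℕ) (N : Tm) (h : IsLam M) : IsLam (M.subst x N) := by
  obtain ⟨y, B, rfl⟩ := h
  show IsLam (if y = x then Tm.lam y B else Tm.lam y (B.subst x N))
  by_cases hyx : y = x
  · rw [if_pos hyx]; exact ⟨y, B, rfl⟩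
  · rw [if_neg hyx]; exact ⟨y, B.subst x N, rfl⟩

lemma isLam_substL {M : Tm} (xs : List ℕ) (vs : List Tm) (h : IsLam M) :
    IsLam (substL M xs vs) := by
  induction xs generalizing M vs with
  | nil => exact h
  | cons x xs ih =>
    cases vs with
    | nil => simpa [substL_nil'] using h
    | cons v vs => exact ih vs (isLam_subst x v h)

/-- The main beta machine: a `lams`-abstraction applied to a list of values
reduces in `xs.length` steps to the simultaneous substitution. -/
lemma stepsN_beta_lams (xs : List ℕ) (B : Tm) (vs : List Tm)
    (nodup : xs.Nodup) (hlen : xs.length = vs.length) (hv : ∀ v ∈ vs, Tm.IsValue v) :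
    stepsN Tm.Cbv xs.length (appList (lams xs B) vs) (substL B xs vs) := by
  induction xs generalizing B vs with
  | nil =>
    cases vs with
    | nil => rfl
    | cons v vs => simp at hlen
  | cons x xs ih =>
    cases vs with
    | nil => simp at hlen
    | cons v vs =>
      refine ⟨appList (lams xs (B.subst x v)) vs, ?_, ?_⟩
      · refine cbv_appList_head vs ?_
        have hb : Tm.Cbv (Tm.app (Tm.lam x (lams xs B)) v) ((lams xs B).subst x v) :=
          Tm.Cbv.beta (hv v (by simp))
        rwa [subst_lams xs B x v (List.nodup_cons.1 nodup).1] at hb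
      · rw [substL_cons]
        exact ih (B.subst x v) vs (List.nodup_cons.1 nodup).2 (by simpa using hlen)
          (fun w hw => hv w (by simp [hw]))

lemma RedLe.beta_lams (xs : List ℕ) (B : Tm) (vs : List Tm)
    (nodup : xs.Nodup) (hlen : xs.length = vs.length) (hv : ∀ v ∈ vs, Tm.IsValue v) :
    RedLe xs.length (appList (lams xs B) vs) (substL B xs vs) :=
  ⟨xs.length, le_refl _, stepsN_beta_lams xs B vs nodup hlen hv⟩

end Aux



section Sig

variable (g : ℕ) (ar : Fin g → ℕ)

lemma CONf_zero (i : Fin g) (xs : List ℕ) :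
    CONf g ar 0 i xs = lams (List.range (g+1)) (appList (.var i.val) (xs.map .var)) := by
  rw [CONf]

lemma CONf_succ (k : ℕ) (i : Fin g) (xs : List ℕ) :
    CONf g ar (k+1) i xs =
      Tm.lam (2 * (g + 2 + Finset.univ.sup ar) + 2)
        (appList (.var (2 * (g + 2 + Finset.univ.sup ar) + 2))
          ((List.ofFn fun j : Fin g =>
              lams (List.range' (g + 2 + Finset.univ.sup ar) (ar j))
                (Tm.app
                  (Tm.lam (g + 1 + xs.length)
                    (CONf g ar k i (xs ++ [g + 1 + xs.length])))
                  (CONf g ar 0 j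
                    (List.range' (g + 2 + Finset.univ.sup ar) (ar j))))) ++
            [lams (List.range' (g + 2 + Finset.univ.sup ar) (ar i - xs.length - 1))
              (errTm g)])) := by
  rw [CONf]

lemma encode_def (i : ℕ) (ts : List CTm) :
    CTm.encode g (CTm.mk i ts)
      = lams (List.range (g+1)) (appList (.var i) (ts.map (CTm.encode g))) := by
  rw [CTm.encode]
  congr 1
  simp

/-- Canonical variable names `x₁,…,x_m`. -/
def names (m : ℕ) : List ℕ := List.range' (g+1) m

lemma names_eq (m : ℕ) : (List.range m).map (g + 1 + ·) = names g m := by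
  rw [names, List.range'_eq_map_range]

lemma names_length (m : ℕ) : (names g m).length = m := by simp [names]

lemma names_nodup (m : ℕ) : (names g m).Nodup := by
  rw [names]
  exact List.nodup_range' (n := m) (s := g+1) (step := 1) (by norm_num)

lemma mem_names {m x : ℕ} : x ∈ names g m ↔ g + 1 ≤ x ∧ x < g + 1 + m := by
  rw [names, List.mem_range'_1]

lemma names_succ (m : ℕ) : names g (m+1) = names g m ++ [g+1+m] := by
  rw [names, names, List.range'_1_concat]

lemma foldr_fv_subset (l : List Tm) (s : Finset ℕ) (h : ∀ N ∈ l, N.fv ⊆ s) :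
    l.foldr (fun N t => N.fv ∪ t) ∅ ⊆ s := by
  induction l with
  | nil => simp
  | cons N l ih =>
    simp only [List.foldr_cons]
    exact Finset.union_subset (h N (by simp)) (ih (fun P hP => h P (by simp [hP])))

lemma fv_appList_subset {M : Tm} {l : List Tm} {s : Finset ℕ}
    (hM : M.fv ⊆ s) (h : ∀ N ∈ l, N.fv ⊆ s) : (appList M l).fv ⊆ s := by
  rw [fv_appList]
  exact Finset.union_subset hM (foldr_fv_subset l s h)

lemma errTm_closed : (errTm g).fv = ∅ := by
  rw [errTm, fv_lams]
  simp [Tm.fv]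

lemma errTm_isLam : IsLam (errTm g) :=
  isLam_lams _ (by simp [Nat.succ_ne_zero])

lemma encode_isLam (t : CTm) : IsLam (CTm.encode g t) := by
  cases t with
  | mk i ts =>
    rw [encode_def]
    exact isLam_lams _ (by simp [Nat.succ_ne_zero])

lemma encode_closed {t : CTm} (h : CTm.WFC g ar t) : (CTm.encode g t).fv = ∅ := by
  induction h with
  | mk hi hlen hall ih =>
    rw [encode_def, fv_lams, Finset.sdiff_eq_empty_iff_subset]
    refine fv_appList_subset ?_ ?_
    · intro a ha
      simp only [Tm.fv, Finset.mem_singleton] at ha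
      subst ha
      simp
      omega
    · intro N hN
      simp only [List.mem_map] at hN
      obtain ⟨u, hu, rfl⟩ := hN
      rw [ih u hu]
      simp

lemma fv_CONf_zero' (i : Fin g) (xs : List ℕ) (hxs : ∀ x ∈ xs, g < x) :
    (CONf g ar 0 i xs).fv ⊆ xs.toFinset := by
  rw [CONf_zero, fv_lams]
  intro a ha
  simp only [Finset.mem_sdiff] at ha
  have hsub : (appList (Tm.var i.val) (xs.map Tm.var)).fv ⊆ {(i : ℕ)} ∪ xs.toFinset := by
    refine fv_appList_subset (by simp [Tm.fv]) ?_
    intro N hN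
    simp only [List.mem_map] at hN
    obtain ⟨x, hx, rfl⟩ := hN
    intro a ha
    simp only [Tm.fv, Finset.mem_singleton] at ha
    subst ha
    simp [hx]
  have := hsub ha.1
  simp only [Finset.mem_union, Finset.mem_singleton] at this
  rcases this with h1 | h1
  · exfalso; apply ha.2; simp [h1]
  · simpa using h1

lemma fv_CONf (k : ℕ) (i : Fin g) (xs : List ℕ)
    (hxs : ∀ x ∈ xs, g < x ∧ x < g + 2 + Finset.univ.sup ar)
    (hk : xs.length + k ≤ Finset.univ.sup ar + 1) :
    (CONf g ar k i xs).fv ⊆ xs.toFinset := by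
  induction k generalizing i xs with
  | zero => exact fv_CONf_zero' g ar i xs (fun x hx => (hxs x hx).1)
  | succ k ih =>
    rw [CONf_succ]
    show (Tm.lam _ _).fv ⊆ _
    rw [show ∀ y (B : Tm), (Tm.lam y B).fv = B.fv \ {y} from fun _ _ => rfl]
    intro a ha
    simp only [Finset.mem_sdiff, Finset.mem_singleton] at ha
    have hargs : ∀ N ∈ ((List.ofFn fun j : Fin g =>
              lams (List.range' (g + 2 + Finset.univ.sup ar) (ar j))
                (Tm.app
                  (Tm.lam (g + 1 + xs.length)
                    (CONf g ar k i (xs ++ [g + 1 + xs.length])))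
                  (CONf g ar 0 j
                    (List.range' (g + 2 + Finset.univ.sup ar) (ar j))))) ++
            [lams (List.range' (g + 2 + Finset.univ.sup ar) (ar i - xs.length - 1))
              (errTm g)]),
        N.fv ⊆ ({2 * (g + 2 + Finset.univ.sup ar) + 2} : Finset ℕ) ∪ xs.toFinset := by
      intro N hN
      simp only [List.mem_append, List.mem_ofFn, List.mem_singleton] at hN
      rcases hN with ⟨j, rfl⟩ | rfl
      · -- the N_j component
        rw [fv_lams]
        intro a ha2
        simp only [Finset.mem_sdiff] at ha2
        have ha3 : a ∈ (Tm.lam (g + 1 + xs.length)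
            (CONf g ar k i (xs ++ [g + 1 + xs.length]))).fv ∪
            (CONf g ar 0 j (List.range' (g + 2 + Finset.univ.sup ar) (ar j))).fv := ha2.1
        rcases Finset.mem_union.1 ha3 with h1 | h1
        · rw [show ∀ y (B : Tm), (Tm.lam y B).fv = B.fv \ {y} from fun _ _ => rfl] at h1
          simp only [Finset.mem_sdiff, Finset.mem_singleton] at h1
          have := ih i (xs ++ [g + 1 + xs.length]) ?_ (by simp; omega) h1.1
          · simp only [List.toFinset_append, Finset.mem_union, List.toFinset_cons,
              List.toFinset_nil, Finset.mem_insert, Finset.mem_singleton] at this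
            rcases this with h2 | h2
            · simp [h2]
            · simp at h2
              exact absurd h2 h1.2
          · intro x hx
            rcases List.mem_append.1 hx with h2 | h2
            · exact hxs x h2
            · simp at h2
              subst h2
              constructor <;> omega
        · have := fv_CONf_zero' g ar j _ (fun x hx => by
            rw [List.mem_range'_1] at hx
            omega) h1
          exact absurd this (by
            intro hmem
            exact ha2.2 (by simpa using hmem))
      · -- the L component
        rw [fv_lams, errTm_closed]
        simp
    have hmem := fv_appList_subset (by simp [Tm.fv]) hargs ha.1
    simp only [Finset.mem_union, Finset.mem_singleton] at hmem
    rcases hmem with h1 | h1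
    · exact absurd h1 ha.2
    · exact h1

lemma isLam_CONf (k : ℕ) (i : Fin g) (xs : List ℕ) : IsLam (CONf g ar k i xs) := by
  cases k with
  | zero =>
    rw [CONf_zero]
    exact isLam_lams _ (by simp [Nat.succ_ne_zero])
  | succ k =>
    rw [CONf_succ]
    exact ⟨_, _, rfl⟩


/-! ### Substituted components -/

/-- σ-substituted `N_j` component. -/
def NNs (k : ℕ) (i j : Fin g) (m : ℕ) (encs : List Tm) : Tm :=
  lams (List.range' (g + 2 + Finset.univ.sup ar) (ar j))
    (Tm.app (Tm.lam (g + 1 + m)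
        (substL (CONf g ar k i (names g m ++ [g + 1 + m])) (names g m) encs))
      (CONf g ar 0 j (List.range' (g + 2 + Finset.univ.sup ar) (ar j))))

/-- The `L` component. -/
def Ls (i : Fin g) (m : ℕ) : Tm :=
  lams (List.range' (g + 2 + Finset.univ.sup ar) (ar i - m - 1)) (errTm g)

/-- Value form of `N_j`. -/
def VVs (k : ℕ) (i j : Fin g) (m : ℕ) (encs : List Tm) : Tm :=
  if ar j = 0 then
    substL (CONf g ar k i (names g m ++ [g + 1 + m])) (names g m ++ [g + 1 + m])
      (encs ++ [CONf g ar 0 j []])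
  else NNs g ar k i j m encs

lemma isLam_lams' {xs : List ℕ} {B : Tm} (h : IsLam B) : IsLam (lams xs B) := by
  cases xs with
  | nil => exact h
  | cons x xs => exact ⟨x, _, rfl⟩

lemma Ls_closed (i : Fin g) (m : ℕ) : (Ls g ar i m).fv = ∅ := by
  rw [Ls, fv_lams, errTm_closed g]
  simp

lemma Ls_isLam (i : Fin g) (m : ℕ) : IsLam (Ls g ar i m) :=
  isLam_lams' (errTm_isLam g)

lemma CONf_zero_nil_encode (j : Fin g) :
    CONf g ar 0 j [] = CTm.encode g (CTm.mk j.val []) := by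
  rw [CONf_zero, encode_def]
  rfl

lemma lamM_closed (k : ℕ) (i : Fin g) (m : ℕ) (encs : List Tm)
    (hlen : encs.length = m) (hc : ∀ v ∈ encs, v.fv = ∅)
    (hk : m + 1 + k ≤ Finset.univ.sup ar + 1) :
    (Tm.lam (g + 1 + m)
      (substL (CONf g ar k i (names g m ++ [g + 1 + m])) (names g m) encs)).fv = ∅ := by
  rw [show ∀ y (B : Tm), (Tm.lam y B).fv = B.fv \ {y} from fun _ _ => rfl]
  rw [Finset.sdiff_eq_empty_iff_subset]
  have h1 := fv_substL_subset (CONf g ar k i (names g m ++ [g + 1 + m]))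
    (names g m) encs (by rw [names_length, hlen]) hc
  have h2 := fv_CONf g ar k i (names g m ++ [g + 1 + m]) ?_ (by simp [names_length]; omega)
  · intro a ha
    have hmem := h1 ha
    simp only [Finset.mem_sdiff] at hmem
    have := h2 hmem.1
    simp only [List.toFinset_append, Finset.mem_union, List.toFinset_cons, List.toFinset_nil,
      Finset.mem_insert, Finset.mem_singleton] at this
    rcases this with h3 | h3
    · exact absurd h3 hmem.2
    · simp at h3
      simp [h3]
  · intro x hx
    rcases List.mem_append.1 hx with h3 | h3
    · rw [mem_names] at h3
      constructor <;> omega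
    · simp at h3
      subst h3
      constructor <;> omega

lemma NNs_closed (k : ℕ) (i j : Fin g) (m : ℕ) (encs : List Tm)
    (hlen : encs.length = m) (hc : ∀ v ∈ encs, v.fv = ∅)
    (hk : m + 1 + k ≤ Finset.univ.sup ar + 1) :
    (NNs g ar k i j m encs).fv = ∅ := by
  rw [NNs, fv_lams, Finset.sdiff_eq_empty_iff_subset]
  intro a ha
  have ha' : a ∈ (Tm.lam (g + 1 + m)
      (substL (CONf g ar k i (names g m ++ [g + 1 + m])) (names g m) encs)).fv ∪
      (CONf g ar 0 j (List.range' (g + 2 + Finset.univ.sup ar) (ar j))).fv := ha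
  rcases Finset.mem_union.1 ha' with h1 | h1
  · rw [lamM_closed g ar k i m encs hlen hc hk] at h1
    simp at h1
  · have := fv_CONf_zero' g ar j _ (fun x hx => by
      rw [List.mem_range'_1] at hx
      omega) h1
    simpa using this

lemma VVs_closed (k : ℕ) (i j : Fin g) (m : ℕ) (encs : List Tm)
    (hlen : encs.length = m) (hc : ∀ v ∈ encs, v.fv = ∅)
    (hk : m + 1 + k ≤ Finset.univ.sup ar + 1) :
    (VVs g ar k i j m encs).fv = ∅ := by
  rw [VVs]
  by_cases h : ar j = 0
  · rw [if_pos h, Finset.eq_empty_iff_forall_notMem]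
    intro a ha
    have h1 := fv_substL_subset (CONf g ar k i (names g m ++ [g + 1 + m]))
      (names g m ++ [g + 1 + m]) (encs ++ [CONf g ar 0 j []])
      (by simp [names_length, hlen]) ?_ ha
    · simp only [Finset.mem_sdiff] at h1
      have h2 := fv_CONf g ar k i (names g m ++ [g + 1 + m]) ?_
        (by simp [names_length]; omega) h1.1
      · exact h1.2 h2
      · intro x hx
        rcases List.mem_append.1 hx with h3 | h3
        · rw [mem_names] at h3; constructor <;> omega
        · simp at h3; subst h3; constructor <;> omega
    · intro v hv
      rcases List.mem_append.1 hv with h3 | h3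
      · exact hc v h3
      · simp at h3
        subst h3
        rw [CONf_zero_nil_encode]
        exact encode_closed g ar (CTm.WFC.mk j.2 (by simpa using h.symm) (by simp))
  · rw [if_neg h]
    exact NNs_closed g ar k i j m encs hlen hc hk

lemma VVs_isLam (k : ℕ) (i j : Fin g) (m : ℕ) (encs : List Tm) :
    IsLam (VVs g ar k i j m encs) := by
  rw [VVs]
  by_cases h : ar j = 0
  · rw [if_pos h]
    exact isLam_substL _ _ (isLam_CONf g ar k i _)
  · rw [if_neg h]
    rw [NNs]
    exact isLam_lams _ (by
      intro he
      have := congrArg List.length he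
      simp at this
      omega)

lemma NNs_to_VVs (k : ℕ) (i j : Fin g) (m : ℕ) (encs : List Tm)
    (hlen : encs.length = m) :
    RedLe 1 (NNs g ar k i j m encs) (VVs g ar k i j m encs) := by
  rw [VVs]
  by_cases h : ar j = 0
  · rw [if_pos h]
    have : NNs g ar k i j m encs = Tm.app (Tm.lam (g + 1 + m)
        (substL (CONf g ar k i (names g m ++ [g + 1 + m])) (names g m) encs))
        (CONf g ar 0 j []) := by
      rw [NNs, h]
      rfl
    rw [this]
    refine RedLe.single ?_
    have hb := Tm.Cbv.beta (x := g + 1 + m)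
      (M := substL (CONf g ar k i (names g m ++ [g + 1 + m])) (names g m) encs)
      (V := CONf g ar 0 j []) (isLam_CONf g ar 0 j []).isValue
    have he : (substL (CONf g ar k i (names g m ++ [g + 1 + m])) (names g m) encs).subst
        (g + 1 + m) (CONf g ar 0 j [])
        = substL (CONf g ar k i (names g m ++ [g + 1 + m])) (names g m ++ [g + 1 + m])
          (encs ++ [CONf g ar 0 j []]) := by
      rw [substL_append _ _ _ _ _ (by rw [names_length, hlen])]
      rfl
    rwa [he] at hb
  · rw [if_neg h]
    exact RedLe.refl 1 _

/-- σ-substituted form of `CONf (k+1)`. -/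
lemma substL_CONf_succ (k : ℕ) (i : Fin g) (m : ℕ) (encs : List Tm)
    (hc : ∀ v ∈ encs, v.fv = ∅) (hm : m ≤ Finset.univ.sup ar + 1) :
    substL (CONf g ar (k+1) i (names g m)) (names g m) encs
      = Tm.lam (2 * (g + 2 + Finset.univ.sup ar) + 2)
        (appList (Tm.var (2 * (g + 2 + Finset.univ.sup ar) + 2))
          ((List.ofFn fun j : Fin g => NNs g ar k i j m encs) ++ [Ls g ar i m])) := by
  rw [CONf_succ, names_length]
  rw [substL_lam _ _ _ _ (by
    rw [mem_names]
    omega)]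
  rw [substL_appList]
  have hhead : substL (Tm.var (2 * (g + 2 + Finset.univ.sup ar) + 2)) (names g m) encs
      = Tm.var (2 * (g + 2 + Finset.univ.sup ar) + 2) :=
    substL_not_free _ _ _ (fun x hx => by
      rw [mem_names] at hx
      simp only [Tm.fv, Finset.mem_singleton]
      omega)
  have hlist : List.map (fun P => substL P (names g m) encs)
      ((List.ofFn fun j : Fin g => lams (List.range' (g + 2 + Finset.univ.sup ar) (ar j))
          ((Tm.lam (g + 1 + m) (CONf g ar k i (names g m ++ [g + 1 + m]))).app
            (CONf g ar 0 j (List.range' (g + 2 + Finset.univ.sup ar) (ar j))))) ++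
        [lams (List.range' (g + 2 + Finset.univ.sup ar) (ar i - m - 1)) (errTm g)])
      = (List.ofFn fun j : Fin g => NNs g ar k i j m encs) ++ [Ls g ar i m] := by
    rw [List.map_append, List.map_ofFn]
    congr 1
    · congr 1
      funext j
      show substL _ (names g m) encs = NNs g ar k i j m encs
      rw [substL_lams _ _ _ _ (fun x hx => by
        rw [mem_names] at hx
        intro hmem
        rw [List.mem_range'_1] at hmem
        omega)]
      rw [substL_app]
      rw [substL_lam _ _ _ _ (by rw [mem_names]; omega)]
      rw [substL_not_free (CONf g ar 0 j _) _ _ (fun x hx hmem => by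
        rw [mem_names] at hx
        have := fv_CONf_zero' g ar j _ (fun y hy => by
          rw [List.mem_range'_1] at hy
          omega) hmem
        rw [List.mem_toFinset, List.mem_range'_1] at this
        omega)]
      rfl
    · show [substL _ (names g m) encs] = [Ls g ar i m]
      congr 1
      exact substL_closed _ _ _ (Ls_closed g ar i m)
  rw [hhead, hlist]

/-- σ-substituted form of `CONf 0` on general variable lists. -/
lemma substL_CONf_zero_gen (i : Fin g) (xs : List ℕ) (vs : List Tm)
    (hxs : ∀ x ∈ xs, g < x) (nodup : xs.Nodup) (hlen : xs.length = vs.length)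
    (hc : ∀ v ∈ vs, v.fv = ∅) :
    substL (CONf g ar 0 i xs) xs vs
      = lams (List.range (g+1)) (appList (.var i.val) vs) := by
  rw [CONf_zero]
  rw [substL_lams _ _ _ _ (fun x hx => by
    intro hmem
    rw [List.mem_range] at hmem
    exact absurd (hxs x hx) (by omega))]
  rw [substL_appList_vars _ _ _ (fun x hx => by
    simp only [Tm.fv, Finset.mem_singleton]
    have := hxs x hx
    have := i.2
    omega) nodup hlen hc]


lemma nodup_range'' (s n : ℕ) : (List.range' s n).Nodup :=
  List.nodup_range' (s := s) (n := n) (step := 1) (by norm_num)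

lemma forall₂_append' {R : Tm → Tm → Prop} {l1 l2 l3 l4 : List Tm}
    (h1 : List.Forall₂ R l1 l2) (h2 : List.Forall₂ R l3 l4) :
    List.Forall₂ R (l1 ++ l3) (l2 ++ l4) := by
  induction h1 with
  | nil => exact h2
  | cons hab _ ih => exact List.Forall₂.cons hab ih

lemma mem_ofFn' {n : ℕ} {f : Fin n → Tm} {a : Tm} (h : a ∈ List.ofFn f) :
    ∃ j, f j = a := by
  have := List.mem_ofFn.1 h
  exact this

lemma ofFn_forall₂ {n : ℕ} (f f' : Fin n → Tm) (h : ∀ j, RedLe 1 (f j) (f' j)) :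
    List.Forall₂ (RedLe 1) (List.ofFn f) (List.ofFn f') := by
  induction n with
  | zero => simp
  | succ n ih =>
    rw [List.ofFn_succ, List.ofFn_succ]
    exact List.Forall₂.cons (h 0) (ih _ _ (fun j => h j.succ))

lemma NL_closed (k : ℕ) (i : Fin g) (m : ℕ) (encs : List Tm)
    (hlen : encs.length = m) (hc : ∀ v ∈ encs, v.fv = ∅)
    (hk : m + 1 + k ≤ Finset.univ.sup ar + 1) :
    ∀ N ∈ (List.ofFn fun j : Fin g => NNs g ar k i j m encs) ++ [Ls g ar i m],
      N.fv = ∅ := by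
  intro N hN
  rcases List.mem_append.1 hN with h1 | h1
  · obtain ⟨j, rfl⟩ := mem_ofFn' h1
    exact NNs_closed g ar k i j m encs hlen hc hk
  · simp at h1
    subst h1
    exact Ls_closed g ar i m

lemma VL_closed (k : ℕ) (i : Fin g) (m : ℕ) (encs : List Tm)
    (hlen : encs.length = m) (hc : ∀ v ∈ encs, v.fv = ∅)
    (hk : m + 1 + k ≤ Finset.univ.sup ar + 1) :
    ∀ N ∈ (List.ofFn fun j : Fin g => VVs g ar k i j m encs) ++ [Ls g ar i m],
      N.fv = ∅ := by
  intro N hN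
  rcases List.mem_append.1 hN with h1 | h1
  · obtain ⟨j, rfl⟩ := mem_ofFn' h1
    exact VVs_closed g ar k i j m encs hlen hc hk
  · simp at h1
    subst h1
    exact Ls_closed g ar i m

lemma VL_isLam (k : ℕ) (i : Fin g) (m : ℕ) (encs : List Tm) :
    ∀ N ∈ (List.ofFn fun j : Fin g => VVs g ar k i j m encs) ++ [Ls g ar i m],
      IsLam N := by
  intro N hN
  rcases List.mem_append.1 hN with h1 | h1
  · obtain ⟨j, rfl⟩ := mem_ofFn' h1
    exact VVs_isLam g ar k i j m encs
  · simp at h1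
    subst h1
    exact Ls_isLam g ar i m

/-- Phases 1–2: fire the top redex and normalize the `N_j` to values. -/
lemma phase12 (k : ℕ) (i : Fin g) (m : ℕ) (encs : List Tm) (X : Tm) (rest : List Tm)
    (hX : Tm.IsValue X)
    (hlen : encs.length = m) (hc : ∀ v ∈ encs, v.fv = ∅)
    (hk : m + 1 + k ≤ Finset.univ.sup ar + 1) :
    RedLe (g + 2)
      (appList (substL (CONf g ar (k+1) i (names g m)) (names g m) encs) (X :: rest))
      (appList X
        (((List.ofFn fun j : Fin g => VVs g ar k i j m encs) ++ [Ls g ar i m]) ++ rest)) := by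
  rw [substL_CONf_succ g ar k i m encs hc (by omega), appList_cons]
  set NL := (List.ofFn fun j : Fin g => NNs g ar k i j m encs) ++ [Ls g ar i m] with hNL
  set VL := (List.ofFn fun j : Fin g => VVs g ar k i j m encs) ++ [Ls g ar i m] with hVL
  have hsub : (appList (Tm.var (2 * (g + 2 + Finset.univ.sup ar) + 2)) NL).subst
      (2 * (g + 2 + Finset.univ.sup ar) + 2) X = appList X NL := by
    rw [subst_appList]
    congr 1
    · show (if _ = _ then X else _) = X
      rw [if_pos rfl]
    · refine (List.map_congr_left ?_).trans (List.map_id NL)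
      intro N hN
      exact subst_not_free _ _ _ (by
        rw [NL_closed g ar k i m encs hlen hc hk N hN]
        simp)
  have hstep1 : RedLe 1
      (appList (Tm.app (Tm.lam (2 * (g + 2 + Finset.univ.sup ar) + 2)
        (appList (Tm.var (2 * (g + 2 + Finset.univ.sup ar) + 2)) NL)) X) rest)
      (appList (appList X NL) rest) := by
    refine RedLe.single (cbv_appList_head rest ?_)
    have := Tm.Cbv.beta (x := 2 * (g + 2 + Finset.univ.sup ar) + 2)
      (M := appList (Tm.var (2 * (g + 2 + Finset.univ.sup ar) + 2)) NL) (V := X) hX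
    rwa [hsub] at this
  have hstep2 : RedLe (g + 1) (appList X NL) (appList X VL) := by
    have hf : List.Forall₂ (RedLe 1) NL VL := by
      rw [hNL, hVL]
      refine forall₂_append' ?_ ?_
      · exact ofFn_forall₂ _ _ (fun j => NNs_to_VVs g ar k i j m encs hlen)
      · exact List.Forall₂.cons (RedLe.refl 1 _) List.Forall₂.nil
    have := RedLe.appList_args X hf
    refine this.mono ?_
    rw [hNL]
    simp
  have hstep2' : RedLe (g + 1) (appList (appList X NL) rest)
      (appList X (VL ++ rest)) := by
    have h := RedLe.appList_head rest hstep2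
    rwa [← appList_append X VL rest] at h
  exact (hstep1.trans hstep2').mono (by omega)

/-- Phase 4: consume the argument encodings into `VVs`. -/
lemma consume (k : ℕ) (i j : Fin g) (m : ℕ) (encs : List Tm) (us : List CTm)
    (hlen : encs.length = m) (hc : ∀ v ∈ encs, v.fv = ∅)
    (hk : m + 1 + k ≤ Finset.univ.sup ar + 1)
    (hus : us.length = ar j) (husc : ∀ u ∈ us, (CTm.encode g u).fv = ∅) :
    RedLe (Finset.univ.sup ar + 1)
      (appList (VVs g ar k i j m encs) (us.map (CTm.encode g)))
      (substL (CONf g ar k i (names g (m+1))) (names g (m+1))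
        (encs ++ [CTm.encode g (CTm.mk j.val us)])) := by
  rw [names_succ]
  by_cases h : ar j = 0
  · have hus0 : us = [] := List.length_eq_zero_iff.1 (by omega)
    subst hus0
    apply RedLe.of_eq
    show VVs g ar k i j m encs = _
    rw [VVs, if_pos h, CONf_zero_nil_encode]
  · rw [VVs, if_neg h, NNs]
    have hval : ∀ v ∈ us.map (CTm.encode g), Tm.IsValue v := by
      intro v hv
      obtain ⟨u, hu, rfl⟩ := List.mem_map.1 hv
      exact (encode_isLam g u).isValue
    have hcl : ∀ v ∈ us.map (CTm.encode g), v.fv = ∅ := by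
      intro v hv
      obtain ⟨u, hu, rfl⟩ := List.mem_map.1 hv
      exact husc u hu
    have hb := (RedLe.beta_lams (List.range' (g + 2 + Finset.univ.sup ar) (ar j))
      (Tm.app (Tm.lam (g + 1 + m)
        (substL (CONf g ar k i (names g m ++ [g + 1 + m])) (names g m) encs))
        (CONf g ar 0 j (List.range' (g + 2 + Finset.univ.sup ar) (ar j))))
      (us.map (CTm.encode g))
      (nodup_range'' _ _) (by simp [hus]) hval).mono
      (le_of_eq (by simp) : (List.range' (g + 2 + Finset.univ.sup ar) (ar j)).length ≤ ar j)
    have hcomp : substL (Tm.app (Tm.lam (g + 1 + m)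
        (substL (CONf g ar k i (names g m ++ [g + 1 + m])) (names g m) encs))
        (CONf g ar 0 j (List.range' (g + 2 + Finset.univ.sup ar) (ar j))))
        (List.range' (g + 2 + Finset.univ.sup ar) (ar j)) (us.map (CTm.encode g))
        = Tm.app (Tm.lam (g + 1 + m)
            (substL (CONf g ar k i (names g m ++ [g + 1 + m])) (names g m) encs))
          (CTm.encode g (CTm.mk j.val us)) := by
      rw [substL_app]
      congr 1
      · refine substL_not_free _ _ _ ?_
        intro z hz
        rw [lamM_closed g ar k i m encs hlen hc hk]
        simp
      · rw [substL_CONf_zero_gen g ar j _ _ (fun x hx => by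
          rw [List.mem_range'_1] at hx
          omega) (nodup_range'' _ _) (by simp [hus]) hcl]
        rw [encode_def]
    have hstep : RedLe 1
        (Tm.app (Tm.lam (g + 1 + m)
          (substL (CONf g ar k i (names g m ++ [g + 1 + m])) (names g m) encs))
          (CTm.encode g (CTm.mk j.val us)))
        (substL (CONf g ar k i (names g m ++ [g + 1 + m])) (names g m ++ [g + 1 + m])
          (encs ++ [CTm.encode g (CTm.mk j.val us)])) := by
      refine RedLe.single ?_
      have hb2 := Tm.Cbv.beta (x := g + 1 + m)
        (M := substL (CONf g ar k i (names g m ++ [g + 1 + m])) (names g m) encs)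
        (V := CTm.encode g (CTm.mk j.val us)) (encode_isLam g _).isValue
      rwa [substL_append _ _ _ _ _ (by rw [names_length, hlen])]
    have := (hb.trans (RedLe.of_eq (n := 0) hcomp)).trans hstep
    refine this.mono ?_
    have : ar j ≤ Finset.univ.sup ar := Finset.le_sup (Finset.mem_univ j)
    simp
    omega

/-- getD of the value list. -/
lemma VL_getD_lt (k : ℕ) (i : Fin g) (m : ℕ) (encs : List Tm) (j : Fin g) (d : Tm) :
    ((List.ofFn fun j : Fin g => VVs g ar k i j m encs) ++ [Ls g ar i m]).getD j.val d
      = VVs g ar k i j m encs := by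
  rw [List.getD_eq_getElem _ _ (by simp)]
  rw [List.getElem_append_left (by simp [j.2])]
  simp

lemma VL_getD_last (k : ℕ) (i : Fin g) (m : ℕ) (encs : List Tm) (d : Tm) :
    ((List.ofFn fun j : Fin g => VVs g ar k i j m encs) ++ [Ls g ar i m]).getD g d
      = Ls g ar i m := by
  rw [List.getD_eq_getElem _ _ (by simp)]
  rw [List.getElem_append_right (by simp)]
  simp

/-- Reconstruction step: from stage `m` to stage `m+1`. -/
lemma reach (k : ℕ) (i j : Fin g) (m : ℕ) (encs : List Tm) (us : List CTm) (rest : List Tm)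
    (hlen : encs.length = m) (hc : ∀ v ∈ encs, v.fv = ∅)
    (hk : m + 1 + k ≤ Finset.univ.sup ar + 1)
    (hus : us.length = ar j) (husc : ∀ u ∈ us, (CTm.encode g u).fv = ∅) :
    RedLe (2 * g + 2 * Finset.univ.sup ar + 8)
      (appList (substL (CONf g ar (k+1) i (names g m)) (names g m) encs)
        (CTm.encode g (CTm.mk j.val us) :: rest))
      (appList (substL (CONf g ar k i (names g (m+1))) (names g (m+1))
        (encs ++ [CTm.encode g (CTm.mk j.val us)])) rest) := by
  set VL := (List.ofFn fun j : Fin g => VVs g ar k i j m encs) ++ [Ls g ar i m] with hVL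
  have h1 := phase12 g ar k i m encs (CTm.encode g (CTm.mk j.val us)) rest
    (encode_isLam g _).isValue hlen hc hk
  have hXdef : CTm.encode g (CTm.mk j.val us)
      = lams (List.range (g+1)) (appList (.var j.val) (us.map (CTm.encode g))) :=
    encode_def g _ _
  have h2 : RedLe (g + 1)
      (appList (CTm.encode g (CTm.mk j.val us)) VL)
      (substL (appList (.var j.val) (us.map (CTm.encode g))) (List.range (g+1)) VL) := by
    rw [hXdef]
    refine (RedLe.beta_lams (List.range (g+1)) _ VL List.nodup_range (by simp [hVL]) ?_).mono
      (le_of_eq (by simp))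
    intro v hv
    exact ((VL_isLam g ar k i m encs) v hv).isValue
  have h3 : substL (appList (.var j.val) (us.map (CTm.encode g))) (List.range (g+1)) VL
      = appList (VVs g ar k i j m encs) (us.map (CTm.encode g)) := by
    rw [substL_appList]
    congr 1
    · have : (Tm.var j.val) = Tm.var (0 + j.val) := by rw [Nat.zero_add]
      rw [this, List.range_eq_range', substL_var_range' 0 (g+1) j.val (by omega) VL
        (errTm g) (by simp [hVL]) (fun v hv => VL_closed g ar k i m encs hlen hc hk v hv)]
      exact VL_getD_lt g ar k i m encs j (errTm g)
    · refine List.map_congr_left ?_ |>.trans (List.map_id _)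
      intro v hv
      obtain ⟨u, hu, rfl⟩ := List.mem_map.1 hv
      exact substL_closed _ _ _ (husc u hu)
  have h4 := consume g ar k i j m encs us hlen hc hk hus husc
  have step23 : RedLe (g + 1 + (Finset.univ.sup ar + 1))
      (appList (appList (CTm.encode g (CTm.mk j.val us)) VL) rest)
      (appList (substL (CONf g ar k i (names g (m+1))) (names g (m+1))
        (encs ++ [CTm.encode g (CTm.mk j.val us)])) rest) := by
    refine RedLe.appList_head rest ?_
    exact (h2.trans (RedLe.of_eq (n := 0) h3)).trans h4 |>.mono (by omega)
  have h1' := h1.trans (by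
    rw [appList_append (CTm.encode g (CTm.mk j.val us)) VL rest]
    exact step23)
  exact h1'.mono (by omega)

/-- Error-head step: `⊥` applied to the components collapses to `⊥`. -/
lemma errhead (k : ℕ) (i : Fin g) (m : ℕ) (encs : List Tm) (rest : List Tm)
    (hlen : encs.length = m) (hc : ∀ v ∈ encs, v.fv = ∅)
    (hk : m + 1 + k ≤ Finset.univ.sup ar + 1)
    (harm : ar i - m = k + 1)
    (hrlen : rest.length = k) (hrval : ∀ r ∈ rest, Tm.IsValue r) :
    RedLe (2 * g + 2 * Finset.univ.sup ar + 8)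
      (appList (substL (CONf g ar (k+1) i (names g m)) (names g m) encs)
        (errTm g :: rest))
      (errTm g) := by
  set VL := (List.ofFn fun j : Fin g => VVs g ar k i j m encs) ++ [Ls g ar i m] with hVL
  have h1 := phase12 g ar k i m encs (errTm g) rest (errTm_isLam g).isValue hlen hc hk
  have h2 : RedLe (g + 1) (appList (errTm g) VL)
      (substL (Tm.var g) (List.range (g+1)) VL) := by
    rw [errTm]
    refine (RedLe.beta_lams (List.range (g+1)) _ VL List.nodup_range (by simp [hVL]) ?_).mono
      (le_of_eq (by simp))
    intro v hv
    exact ((VL_isLam g ar k i m encs) v hv).isValue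
  have h3 : substL (Tm.var g) (List.range (g+1)) VL = Ls g ar i m := by
    have : (Tm.var g) = Tm.var (0 + g) := by rw [Nat.zero_add]
    rw [this, List.range_eq_range', substL_var_range' 0 (g+1) g (by omega) VL
      (errTm g) (by simp [hVL]) (fun v hv => VL_closed g ar k i m encs hlen hc hk v hv)]
    exact VL_getD_last g ar k i m encs (errTm g)
  have h4 : RedLe k (appList (Ls g ar i m) rest) (errTm g) := by
    rw [Ls]
    have harr : ar i - m - 1 = k := by omega
    rw [harr]
    have hb := (RedLe.beta_lams (List.range' (g + 2 + Finset.univ.sup ar) k)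
      (errTm g) rest (nodup_range'' _ _) (by simp [hrlen]) hrval).mono
      (le_of_eq (by simp) : (List.range' (g + 2 + Finset.univ.sup ar) k).length ≤ k)
    have : substL (errTm g) (List.range' (g + 2 + Finset.univ.sup ar) k) rest = errTm g :=
      substL_closed _ _ _ (errTm_closed g)
    rw [this] at hb
    simpa using hb
  have step234 : RedLe (g + 1 + k)
      (appList (appList (errTm g) VL) rest) (errTm g) := by
    have h23 : RedLe (g + 1) (appList (appList (errTm g) VL) rest)
        (appList (Ls g ar i m) rest) := by
      refine RedLe.appList_head rest ?_
      exact (h2.trans (RedLe.of_eq (n := 0) h3)).mono (by omega)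
    exact h23.trans h4
  have hkbound : k ≤ Finset.univ.sup ar := by
    have : ar i ≤ Finset.univ.sup ar := Finset.le_sup (Finset.mem_univ i)
    omega
  have h1' := h1.trans (by
    rw [appList_append (errTm g) VL rest]
    exact step234)
  exact h1'.mono (by omega)


/-- The main downward induction. -/
lemma main_induction (k : ℕ) :
    ∀ (i : Fin g) (m : ℕ), ar i - m = k → m ≤ ar i →
      ∀ ts : List CTm, ts.length = ar i → (∀ t ∈ ts, CTm.WFC g ar t) →
        (RedLe (k * (2 * g + 2 * Finset.univ.sup ar + 8))
          (appList (substL (CONf g ar k i (names g m)) (names g m)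
            ((ts.take m).map (CTm.encode g))) ((ts.drop m).map (CTm.encode g)))
          (CTm.encode g (CTm.mk i.val ts))) ∧
        (∀ Xs : List Tm, Xs.length = ar i - m →
          (∀ p < Xs.length, Xs.getD p (errTm g) = errTm g ∨
            Xs.getD p (errTm g) = CTm.encode g (ts.getD (m + p) default)) →
          errTm g ∈ Xs →
          RedLe (k * (2 * g + 2 * Finset.univ.sup ar + 8))
            (appList (substL (CONf g ar k i (names g m)) (names g m)
              ((ts.take m).map (CTm.encode g))) Xs) (errTm g)) := by
  induction k with
  | zero =>
    intro i m hm hle ts hts hwf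
    have hmar : m = ar i := by omega
    constructor
    · have hdrop : ts.drop m = [] := List.drop_eq_nil_of_le (by omega)
      have htake : ts.take m = ts := List.take_of_length_le (by omega)
      rw [hdrop, htake]
      apply RedLe.of_eq
      show substL (CONf g ar 0 i (names g m)) (names g m) (ts.map (CTm.encode g)) = _
      rw [substL_CONf_zero_gen g ar i (names g m) (ts.map (CTm.encode g))
        (fun x hx => by rw [mem_names] at hx; omega) (names_nodup g m)
        (by simp [names_length, hts, hmar])
        (fun v hv => by
          obtain ⟨u, hu, rfl⟩ := List.mem_map.1 hv
          exact encode_closed g ar (hwf u hu))]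
      rw [encode_def]
    · intro Xs hXs _ hmem
      rw [hm] at hXs
      rw [List.length_eq_zero_iff.1 hXs] at hmem
      simp at hmem
  | succ k ih =>
    intro i m hm hle ts hts hwf
    have hmlt : m < ar i := by omega
    have hm_lt : m < ts.length := by omega
    have hgetD : ts.getD m default = ts[m] := List.getD_eq_getElem ts default hm_lt
    rcases hshape : ts.getD m default with ⟨jn, us⟩
    have hwf_t : CTm.WFC g ar (CTm.mk jn us) := by
      rw [← hshape, hgetD]
      exact hwf _ (List.getElem_mem _)
    obtain ⟨hj, hus_len, hall⟩ : ∃ h : jn < g, us.length = ar ⟨jn, h⟩ ∧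
        ∀ u ∈ us, CTm.WFC g ar u := by
      cases hwf_t with
      | mk h h1 h2 => exact ⟨h, h1, h2⟩
    set j : Fin g := ⟨jn, hj⟩ with hjdef
    have hencs_len : ((ts.take m).map (CTm.encode g)).length = m := by
      simp
      omega
    have hencs_closed : ∀ v ∈ (ts.take m).map (CTm.encode g), v.fv = ∅ := by
      intro v hv
      obtain ⟨u, hu, rfl⟩ := List.mem_map.1 hv
      exact encode_closed g ar (hwf u (List.mem_of_mem_take hu))
    have harsup : ar i ≤ Finset.univ.sup ar := Finset.le_sup (Finset.mem_univ i)
    have hk' : m + 1 + k ≤ Finset.univ.sup ar + 1 := by omega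
    have husc : ∀ u ∈ us, (CTm.encode g u).fv = ∅ :=
      fun u hu => encode_closed g ar (hall u hu)
    have htsm : ts[m] = CTm.mk jn us := by rw [← hgetD, hshape]
    have htake1 : (ts.take (m+1)).map (CTm.encode g)
        = (ts.take m).map (CTm.encode g) ++ [CTm.encode g (CTm.mk jn us)] := by
      rw [List.take_succ, List.getElem?_eq_getElem hm_lt, htsm]
      simp
    have hreach := fun rest => reach g ar k i j m ((ts.take m).map (CTm.encode g)) us rest
      hencs_len hencs_closed hk' hus_len husc
    constructor
    · -- positive clause
      have hdrop : (ts.drop m).map (CTm.encode g)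
          = CTm.encode g (CTm.mk jn us) :: (ts.drop (m+1)).map (CTm.encode g) := by
        rw [List.drop_eq_getElem_cons hm_lt, htsm]
        simp
      rw [hdrop]
      have h1 := hreach ((ts.drop (m+1)).map (CTm.encode g))
      have h2 := (ih i (m+1) (by omega) (by omega) ts hts hwf).1
      rw [htake1] at h2
      exact (h1.trans h2).mono (le_of_eq (by ring))
    · -- error clause
      intro Xs hXs hXsp hmemX
      obtain ⟨X0, tl, rfl⟩ : ∃ X0 tl, Xs = X0 :: tl := by
        cases Xs with
        | nil => simp at hXs; omega
        | cons a l => exact ⟨a, l, rfl⟩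
      have htl_len : tl.length = k := by
        simp at hXs
        omega
      by_cases hX0 : X0 = errTm g
      · subst hX0
        have hvals : ∀ r ∈ tl, Tm.IsValue r := by
          intro r hr
          obtain ⟨p, hp, hpe⟩ := List.mem_iff_getElem.1 hr
          have hXp := hXsp (p+1) (by simp; omega)
          rw [List.getD_cons_succ] at hXp
          rw [List.getD_eq_getElem tl (errTm g) hp, hpe] at hXp
          rcases hXp with h | h
          · rw [h]; exact (errTm_isLam g).isValue
          · rw [h]; exact (encode_isLam g _).isValue
        have := errhead g ar k i m ((ts.take m).map (CTm.encode g)) tl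
          hencs_len hencs_closed hk' hm htl_len hvals
        exact this.mono (by nlinarith)
      · have h0 := hXsp 0 (by simp)
        rw [List.getD_cons_zero, Nat.add_zero, hshape] at h0
        rcases h0 with h0 | h0
        · exact absurd h0 hX0
        subst h0
        have h1 := hreach tl
        have h2 := (ih i (m+1) (by omega) (by omega) ts hts hwf).2 tl (by omega) ?_ ?_
        · rw [htake1] at h2
          exact (h1.trans h2).mono (le_of_eq (by ring))
        · intro p hp
          have hXp := hXsp (p+1) (by simp; omega)
          rw [List.getD_cons_succ] at hXp
          rw [show m + 1 + p = m + (p + 1) by omega]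
          exact hXp
        · rcases List.mem_cons.1 hmemX with h | h
          · exact absurd h.symm hX0
          · exact h

end Sig

/-- proved: constructor reconstruction in bounded time. -/
theorem CON_bounded' (g : ℕ) (ar : Fin g → ℕ) :
    ∀ (i : Fin g) (m : ℕ), m ≤ ar i →
      ∀ ts : List CTm, ts.length = ar i → (∀ t ∈ ts, CTm.WFC g ar t) →
        (RedLe ((Finset.univ.sup ar + 1) * (2 * g + 2 * Finset.univ.sup ar + 8))
          (appList
            (substL (CON g ar i m) ((List.range m).map (g + 1 + ·))
              ((ts.take m).map (CTm.encode g)))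
            ((ts.drop m).map (CTm.encode g)))
          (CTm.encode g (CTm.mk i.val ts))) ∧
        (∀ Xs : List Tm, Xs.length = ar i - m →
          (∀ p < Xs.length, Xs.getD p (errTm g) = errTm g ∨
            Xs.getD p (errTm g) = CTm.encode g (ts.getD (m + p) default)) →
          errTm g ∈ Xs →
          RedLe ((Finset.univ.sup ar + 1) * (2 * g + 2 * Finset.univ.sup ar + 8))
            (appList
              (substL (CON g ar i m) ((List.range m).map (g + 1 + ·))
                ((ts.take m).map (CTm.encode g))) Xs)
            (errTm g)) := by
  intro i m hm ts hts hwf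
  have Hk := main_induction g ar (ar i - m) i m rfl hm ts hts hwf
  have hbound : (ar i - m) * (2 * g + 2 * Finset.univ.sup ar + 8)
      ≤ (Finset.univ.sup ar + 1) * (2 * g + 2 * Finset.univ.sup ar + 8) := by
    refine Nat.mul_le_mul_right _ ?_
    have : ar i ≤ Finset.univ.sup ar := Finset.le_sup (Finset.mem_univ i)
    omega
  rw [CON, names_eq]
  exact ⟨Hk.1.mono hbound, fun Xs h1 h2 h3 => (Hk.2 Xs h1 h2 h3).mono hbound⟩


/-- constructor reconstruction in bounded time. There is a
constant `n` (depending only on the signature) such that for every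
constructor `cᵢ`, every `m ≤ ar i` and all constructor terms
`t₁,…,t_{ar i}`: the term `CON^i_{x₁,…,x_m}` with `⌈t₁⌉,…,⌈t_m⌉` substituted
for its free variables, applied to `⌈t_{m+1}⌉,…,⌈t_{ar i}⌉`, reduces in at
most `n` weak CBV steps to `⌈cᵢ(t₁,…,t_{ar i})⌉`; and if the arguments in
positions `m+1,…,ar i` are each either the corresponding `⌈tⱼ⌉` or `⊥`, with
at least one `⊥`, then it reduces in at most `n` steps to `⊥`. -/
theorem CON_bounded (g : ℕ) (ar : Fin g → ℕ) :
    ∃ n : ℕ, ∀ (i : Fin g) (m : ℕ), m ≤ ar i →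
      ∀ ts : List CTm, ts.length = ar i → (∀ t ∈ ts, CTm.WFC g ar t) →
        (∃ k ≤ n, stepsN Tm.Cbv k
          (appList
            (substL (CON g ar i m) ((List.range m).map (g + 1 + ·))
              ((ts.take m).map (CTm.encode g)))
            ((ts.drop m).map (CTm.encode g)))
          (CTm.encode g (CTm.mk i.val ts))) ∧
        (∀ Xs : List Tm, Xs.length = ar i - m →
          (∀ p < Xs.length, Xs.getD p (errTm g) = errTm g ∨
            Xs.getD p (errTm g) = CTm.encode g (ts.getD (m + p) default)) →
          errTm g ∈ Xs →
          ∃ k ≤ n, stepsN Tm.Cbv k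
            (appList
              (substL (CON g ar i m) ((List.range m).map (g + 1 + ·))
                ((ts.take m).map (CTm.encode g))) Xs)
            (errTm g)) := by
  exact ⟨(Finset.univ.sup ar + 1) * (2 * g + 2 * Finset.univ.sup ar + 8), CON_bounded' g ar⟩
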